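/- arXiv:2309.01556 — 3 statements merged into one kernel-verified Lean document; each statement's English description precedes it below -/
import Mathlib

section
/- Let A = {0,1}, let k be odd with k ≥ 1, and let n ≥ k+1. Each of the sequences γ^{n,k} and ρ^{n,k} (of length 2^n) has pairwise distinct terms and enumerates every word of {0,1}^n exactly once; that is, the maps i ↦ γ^{n,k}_{[i]} and i ↦ ρ^{n,k}_{[i]} are bijections from [0, 2^n−1] onto {0,1}^n. -/
/-- Hamming distance between two words (lists) of the same length:
the number of positions in which they differ. -/
def hammingL {α : Type*} [DecidableEq α] (w w' : List α) : ℕ :=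
  ((w.zip w').filter fun q => decide (q.1 ≠ q.2)).length

/-- `w` (restricted to indices `< N`) is a `σ_k`-Gray cycle over `X`:
its terms are pairwise distinct and enumerate `X` (a bijection from `[0, N-1]` onto `X`),
two consecutive terms have the same length and Hamming distance exactly `k`, and so do
the first and the last term. -/
def IsGrayCycleOn {α : Type*} [DecidableEq α] (k N : ℕ) (w : ℕ → List α)
    (X : Set (List α)) : Prop :=
  Set.BijOn w (Set.Iio N) X ∧
  (∀ i, 1 ≤ i → i < N →
    (w (i - 1)).length = (w i).length ∧ hammingL (w (i - 1)) (w i) = k) ∧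
  (0 < N → (w (N - 1)).length = (w 0).length ∧ hammingL (w (N - 1)) (w 0) = k)

/-- The bit complement `θ : 0 ↔ 1` on the binary alphabet `{0,1}`. -/
def cpl (x : Fin 2) : Fin 2 := x + 1

/-- The bit complement extended letterwise to binary words. -/
def cplW (w : List (Fin 2)) : List (Fin 2) := w.map cpl

/-- The reflected binary Gray code `g^{m,1}` over words of length `m`:
`g^{0,1} = (ε)` and `g^{m+1,1} = (0·g^{m,1}, 1·(g^{m,1})^R)`. -/
def binGray : ℕ → List (List (Fin 2))
  | 0 => [[]]
  | m + 1 =>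
      (binGray m).map (fun w => 0 :: w) ++ (binGray m).reverse.map (fun w => 1 :: w)

/-- The sequence `γ^{n0,1}`: `γ^{n0,1}_{[0]} = g^{n0,1}_{[0]}` and
`γ^{n0,1}_{[i]} = g^{n0,1}_{[2^{n0} - i]}` for `1 ≤ i ≤ 2^{n0} - 1`. -/
def gamma1 (n0 i : ℕ) : List (Fin 2) :=
  if i = 0 then (binGray n0).getD 0 [] else (binGray n0).getD (2 ^ n0 - i) []

/-- The sequence `ρ^{n0,1}`: `ρ^{n0,1}_{[0]} = g^{n0,1}_{[2^{n0}-1]}` and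
`ρ^{n0,1}_{[i]} = g^{n0,1}_{[i-1]}` for `1 ≤ i ≤ 2^{n0} - 1`. -/
def rho1 (n0 i : ℕ) : List (Fin 2) :=
  if i = 0 then (binGray n0).getD (2 ^ n0 - 1) [] else (binGray n0).getD (i - 1) []

/-- `grSeq n0 true t i` (resp. `grSeq n0 false t i`) is the term of index `i` of the
sequence `γ^{n0+2t, 2t+1}` (resp. `ρ^{n0+2t, 2t+1}`), built inductively: the base cases
are `γ^{n0,1}` and `ρ^{n0,1}`, and, writing `i = q·2^m + r` with `m = n0 + 2t` and
`r < 2^m`, `γ^{m+2, (2t+1)+2}_{[i]}` is `θ^r(00)·γ^{m,2t+1}_{[r]}`, `θ^r(01)·ρ^{m,2t+1}_{[r]}`,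
`θ^r(11)·γ^{m,2t+1}_{[r]}`, `θ^r(10)·ρ^{m,2t+1}_{[r]}` according to `q = 0, 1, 2, 3`, and
`ρ^{m+2, (2t+1)+2}_{[i]}` is `θ^r(10)·γ^{m,2t+1}_{[r]}`, `θ^r(11)·ρ^{m,2t+1}_{[r]}`,
`θ^r(01)·γ^{m,2t+1}_{[r]}`, `θ^r(00)·ρ^{m,2t+1}_{[r]}` according to `q = 0, 1, 2, 3`. -/
def grSeq (n0 : ℕ) : Bool → ℕ → ℕ → List (Fin 2)
  | b, 0, i => if b then gamma1 n0 i else rho1 n0 i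
  | b, t + 1, i =>
      cplW^[i % 2 ^ (n0 + 2 * t)]
        (if b then
          (if i / 2 ^ (n0 + 2 * t) = 0 then [0, 0]
           else if i / 2 ^ (n0 + 2 * t) = 1 then [0, 1]
           else if i / 2 ^ (n0 + 2 * t) = 2 then [1, 1] else [1, 0])
         else
          (if i / 2 ^ (n0 + 2 * t) = 0 then [1, 0]
           else if i / 2 ^ (n0 + 2 * t) = 1 then [1, 1]
           else if i / 2 ^ (n0 + 2 * t) = 2 then [0, 1] else [0, 0])) ++
        grSeq n0 (i / 2 ^ (n0 + 2 * t) % 2 == 0) t (i % 2 ^ (n0 + 2 * t))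

/-- For odd `k` and `n ≥ k + 1`, `gammaNK n k i` is the term `γ^{n,k}_{[i]}`
(here `n0 = n - k + 1` and `k = 2·(k/2) + 1`). -/
def gammaNK (n k i : ℕ) : List (Fin 2) := grSeq (n + 1 - k) true (k / 2) i

/-- For odd `k` and `n ≥ k + 1`, `rhoNK n k i` is the term `ρ^{n,k}_{[i]}`. -/
def rhoNK (n k i : ℕ) : List (Fin 2) := grSeq (n + 1 - k) false (k / 2) i


section Aux

open Fin.NatCast

lemma binGray_length (m : ℕ) : (binGray m).length = 2 ^ m := by
  induction m with
  | zero => rfl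
  | succ m ih => simp [binGray, ih]; ring

lemma binGray_mem_length {m : ℕ} {w : List (Fin 2)} (h : w ∈ binGray m) : w.length = m := by
  induction m generalizing w with
  | zero => simp [binGray] at h; simp [h]
  | succ m ih =>
    simp [binGray] at h
    rcases h with ⟨v, hv, rfl⟩ | ⟨v, hv, rfl⟩ <;> simp [ih hv]

lemma binGray_nodup (m : ℕ) : (binGray m).Nodup := by
  induction m with
  | zero => simp [binGray]
  | succ m ih =>
    rw [binGray, List.nodup_append]
    refine ⟨ih.map (fun a b h => by simpa using h),
      ((List.nodup_reverse.mpr ih).map (fun a b h => by simpa using h)), ?_⟩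
    intro x hx y hy hxy
    subst hxy
    simp at hx hy
    obtain ⟨v, _, rfl⟩ := hx
    obtain ⟨u, _, h⟩ := hy
    injection h with h1 _
    exact absurd h1 (by decide)

lemma binGray_complete {m : ℕ} {w : List (Fin 2)} (h : w.length = m) : w ∈ binGray m := by
  induction m generalizing w with
  | zero => simp [List.length_eq_zero_iff] at h; simp [h, binGray]
  | succ m ih =>
    match w with
    | a :: w' =>
      simp at h
      rw [binGray]
      fin_cases a
      · exact List.mem_append_left _ (List.mem_map_of_mem (ih h))
      · exact List.mem_append_right _ (List.mem_map_of_mem (by simpa using ih h))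

lemma binGray_bijOn (m : ℕ) :
    Set.BijOn (fun i => (binGray m).getD i []) (Set.Iio (2 ^ m))
      {w : List (Fin 2) | w.length = m} := by
  refine ⟨fun i hi => ?_, fun i hi j hj h => ?_, fun w hw => ?_⟩
  · simp only [Set.mem_Iio] at hi
    rw [← binGray_length m] at hi
    simp only [Set.mem_setOf_eq]
    exact binGray_mem_length (List.getD_eq_getElem _ _ hi ▸ List.getElem_mem hi)
  · simp only [Set.mem_Iio] at hi hj
    have hi' : i < (binGray m).length := by rw [binGray_length]; exact hi
    have hj' : j < (binGray m).length := by rw [binGray_length]; exact hj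
    simp only [List.getD_eq_getElem _ _ hi', List.getD_eq_getElem _ _ hj'] at h
    exact (List.Nodup.getElem_inj_iff (binGray_nodup m)).mp h
  · simp only [Set.mem_setOf_eq] at hw
    obtain ⟨i, hi, hw⟩ := List.mem_iff_getElem.mp (binGray_complete hw)
    refine ⟨i, by simpa [binGray_length] using hi, ?_⟩
    show (binGray m).getD i [] = w
    rw [List.getD_eq_getElem _ _ hi, hw]

lemma reindex_bijOn {N : ℕ} (f : ℕ → ℕ) (hmap : ∀ i < N, f i < N)
    (hinj : ∀ i < N, ∀ j < N, f i = f j → i = j) (hsurj : ∀ j < N, ∃ i < N, f i = j) :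
    Set.BijOn f (Set.Iio N) (Set.Iio N) := by
  refine ⟨fun i hi => hmap i hi, fun i hi j hj h => hinj i hi j hj h, fun j hj => ?_⟩
  obtain ⟨i, hi, hfi⟩ := hsurj j hj
  exact ⟨i, hi, hfi⟩

lemma gamma1_bijOn (n0 : ℕ) :
    Set.BijOn (gamma1 n0) (Set.Iio (2 ^ n0)) {w : List (Fin 2) | w.length = n0} := by
  have hN : 0 < 2 ^ n0 := Nat.pow_pos (by norm_num)
  have hf : Set.BijOn (fun i => if i = 0 then 0 else 2 ^ n0 - i)
      (Set.Iio (2 ^ n0)) (Set.Iio (2 ^ n0)) := by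
    apply reindex_bijOn
    · intro i hi; split_ifs <;> omega
    · intro i hi j hj h; split_ifs at h <;> omega
    · intro j hj
      by_cases hj0 : j = 0
      · exact ⟨0, hN, by simp [hj0]⟩
      · refine ⟨2 ^ n0 - j, by omega, ?_⟩
        show (if 2 ^ n0 - j = 0 then 0 else 2 ^ n0 - (2 ^ n0 - j)) = j
        rw [if_neg (by omega)]; omega
  have := (binGray_bijOn n0).comp hf
  apply Set.BijOn.congr this
  intro i hi
  simp only [Function.comp, gamma1]
  split_ifs <;> rfl

lemma rho1_bijOn (n0 : ℕ) :
    Set.BijOn (rho1 n0) (Set.Iio (2 ^ n0)) {w : List (Fin 2) | w.length = n0} := by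
  have hN : 0 < 2 ^ n0 := Nat.pow_pos (by norm_num)
  have hf : Set.BijOn (fun i => if i = 0 then 2 ^ n0 - 1 else i - 1)
      (Set.Iio (2 ^ n0)) (Set.Iio (2 ^ n0)) := by
    apply reindex_bijOn
    · intro i hi; split_ifs <;> omega
    · intro i hi j hj h; split_ifs at h <;> omega
    · intro j hj
      by_cases hj0 : j = 2 ^ n0 - 1
      · exact ⟨0, hN, by simp [hj0]⟩
      · refine ⟨j + 1, by omega, ?_⟩
        show (if j + 1 = 0 then 2 ^ n0 - 1 else j + 1 - 1) = j
        rw [if_neg (by omega)]; omega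
  have := (binGray_bijOn n0).comp hf
  apply Set.BijOn.congr this
  intro i hi
  simp only [Function.comp, rho1]
  split_ifs <;> rfl

lemma cplW_iterate (r : ℕ) (l : List (Fin 2)) :
    cplW^[r] l = l.map (fun z => z + (r : Fin 2)) := by
  induction r generalizing l with
  | zero => simp
  | succ r ih =>
    rw [Function.iterate_succ_apply, ih]
    simp only [cplW, List.map_map, Nat.cast_add, Nat.cast_one]
    congr 1
    funext z
    simp [cpl, Function.comp]
    abel

lemma fin2_cast (r : ℕ) : (r : Fin 2) = if r % 2 = 0 then 0 else 1 := by
  apply Fin.ext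
  rw [Fin.val_natCast]
  rcases Nat.mod_two_eq_zero_or_one r with h | h <;> simp [h]

lemma grSeq_succ_eq (n0 t q r : ℕ) (hr : r < 2 ^ (n0 + 2 * t)) (b : Bool) :
    grSeq n0 b (t + 1) (q * 2 ^ (n0 + 2 * t) + r) =
      (if b then
        (if q = 0 then [0, 0] else if q = 1 then [0, 1]
          else if q = 2 then [1, 1] else [1, 0])
       else
        (if q = 0 then [1, 0] else if q = 1 then [1, 1]
          else if q = 2 then [0, 1] else [0, 0])).map (fun z => z + (r : Fin 2)) ++
        grSeq n0 (q % 2 == 0) t r := by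
  have hpos : 0 < 2 ^ (n0 + 2 * t) := Nat.pow_pos (by norm_num)
  have hdiv : (q * 2 ^ (n0 + 2 * t) + r) / 2 ^ (n0 + 2 * t) = q := by
    rw [mul_comm, Nat.mul_add_div hpos, Nat.div_eq_of_lt hr, add_zero]
  have hmod : (q * 2 ^ (n0 + 2 * t) + r) % 2 ^ (n0 + 2 * t) = r := by
    rw [mul_comm, Nat.mul_add_mod, Nat.mod_eq_of_lt hr]
  rw [grSeq, hdiv, hmod, cplW_iterate]

lemma listlen_ncard (n : ℕ) : {w : List (Fin 2) | w.length = n}.ncard = 2 ^ n := by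
  have h1 : {w : List (Fin 2) | w.length = n}.ncard
      = Nat.card (List.Vector (Fin 2) n) := rfl
  rw [h1, Nat.card_eq_fintype_card, card_vector]
  simp

lemma listlen_finite (n : ℕ) : {w : List (Fin 2) | w.length = n}.Finite := by
  have : Finite {w : List (Fin 2) // w.length = n} :=
    inferInstanceAs (Finite (List.Vector (Fin 2) n))
  exact Set.finite_coe_iff.mp this

lemma grSeq_bijOn (n0 t : ℕ) (b : Bool) :
    Set.BijOn (grSeq n0 b t) (Set.Iio (2 ^ (n0 + 2 * t)))
      {w : List (Fin 2) | w.length = n0 + 2 * t} := by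
  induction t generalizing b with
  | zero =>
    cases b
    · exact (rho1_bijOn n0).congr (fun i _ => by simp [grSeq])
    · exact (gamma1_bijOn n0).congr (fun i _ => by simp [grSeq])
  | succ t ih =>
    have hm : n0 + 2 * (t + 1) = (n0 + 2 * t) + 2 := by ring
    have hpos : 0 < 2 ^ (n0 + 2 * t) := Nat.pow_pos (by norm_num)
    have h4 : 2 ^ (n0 + 2 * (t + 1)) = 4 * 2 ^ (n0 + 2 * t) := by rw [hm]; ring
    -- MapsTo
    have hmaps : Set.MapsTo (grSeq n0 b (t + 1)) (Set.Iio (2 ^ (n0 + 2 * (t + 1))))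
        {w : List (Fin 2) | w.length = n0 + 2 * (t + 1)} := by
      intro i hi
      simp only [Set.mem_Iio] at hi
      have hrlt : i % 2 ^ (n0 + 2 * t) < 2 ^ (n0 + 2 * t) := Nat.mod_lt _ hpos
      have hidq : i = (i / 2 ^ (n0 + 2 * t)) * 2 ^ (n0 + 2 * t) + i % 2 ^ (n0 + 2 * t) := by
        rw [mul_comm]; exact (Nat.div_add_mod i (2 ^ (n0 + 2 * t))).symm
      rw [hidq, grSeq_succ_eq n0 t _ _ hrlt]
      simp only [Set.mem_setOf_eq, List.length_append, List.length_map]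
      have hsuf := (ih (i / 2 ^ (n0 + 2 * t) % 2 == 0)).1 (Set.mem_Iio.mpr hrlt)
      simp only [Set.mem_setOf_eq] at hsuf
      rw [hsuf]
      split_ifs <;> simp <;> omega
    -- SurjOn
    have hsurj : Set.SurjOn (grSeq n0 b (t + 1)) (Set.Iio (2 ^ (n0 + 2 * (t + 1))))
        {w : List (Fin 2) | w.length = n0 + 2 * (t + 1)} := by
      intro w hw
      simp only [Set.mem_setOf_eq] at hw
      obtain ⟨a, b2, s, rfl⟩ : ∃ a b2 s, w = a :: b2 :: s := by
        match w with
        | [] => simp at hw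
        | [a] => simp at hw; omega
        | a :: b2 :: s => exact ⟨a, b2, s, rfl⟩
      have hs : s ∈ {w : List (Fin 2) | w.length = n0 + 2 * t} := by
        simp only [Set.mem_setOf_eq]; simp at hw; omega
      obtain ⟨r, hr, hgr⟩ := (ih (b == (a == b2))).2.2 hs
      simp only [Set.mem_Iio] at hr
      have hbound : ∀ q, q < 4 → q * 2 ^ (n0 + 2 * t) + r ∈ Set.Iio (2 ^ (n0 + 2 * (t + 1))) := by
        intro q hq
        simp only [Set.mem_Iio, h4]
        have : q * 2 ^ (n0 + 2 * t) ≤ 3 * 2 ^ (n0 + 2 * t) := Nat.mul_le_mul_right _ (by omega)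
        omega
      have hcast := fin2_cast r
      rcases Nat.mod_two_eq_zero_or_one r with h2 | h2 <;>
      [ (replace hcast : (r : Fin 2) = 0 := by rw [hcast, if_pos h2]);
        (replace hcast : (r : Fin 2) = 1 := by rw [hcast, if_neg (by omega)]) ] <;>
      fin_cases a <;> fin_cases b2 <;> cases b <;>
      simp at hgr <;>
      first
        | (refine ⟨0 * 2 ^ (n0 + 2 * t) + r, hbound 0 (by norm_num), ?_⟩;
            rw [grSeq_succ_eq n0 t 0 r hr]; simp [hcast, hgr]; done)
        | (refine ⟨1 * 2 ^ (n0 + 2 * t) + r, hbound 1 (by norm_num), ?_⟩;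
            rw [grSeq_succ_eq n0 t 1 r hr]; simp [hcast, hgr]; done)
        | (refine ⟨2 * 2 ^ (n0 + 2 * t) + r, hbound 2 (by norm_num), ?_⟩;
            rw [grSeq_succ_eq n0 t 2 r hr]; simp [hcast, hgr]; done)
        | (refine ⟨3 * 2 ^ (n0 + 2 * t) + r, hbound 3 (by norm_num), ?_⟩;
            rw [grSeq_succ_eq n0 t 3 r hr]; simp [hcast, hgr]; done)
    -- InjOn via cardinality
    have himage : grSeq n0 b (t + 1) '' (Set.Iio (2 ^ (n0 + 2 * (t + 1))))
        = {w : List (Fin 2) | w.length = n0 + 2 * (t + 1)} :=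
      Set.Subset.antisymm (Set.mapsTo_iff_image_subset.mp hmaps) hsurj
    have hfin : (Set.Iio (2 ^ (n0 + 2 * (t + 1))) : Set ℕ).Finite := Set.finite_Iio _
    have hinj : Set.InjOn (grSeq n0 b (t + 1)) (Set.Iio (2 ^ (n0 + 2 * (t + 1)))) := by
      apply Set.injOn_of_ncard_image_eq _ hfin
      rw [himage, listlen_ncard]
      rw [← Nat.card_coe_set_eq, Nat.card_eq_fintype_card]
      simp
    exact ⟨hmaps, hinj, hsurj⟩

end Aux

/-- For `k` odd with `k ≥ 1` and `n ≥ k + 1`, each of `i ↦ γ^{n,k}_{[i]}` and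
`i ↦ ρ^{n,k}_{[i]}` is a bijection from `[0, 2^n - 1]` onto `{0,1}^n`. -/
theorem statement5 (n k : ℕ) (hk1 : 1 ≤ k) (hk : Odd k) (hn : k + 1 ≤ n) :
    Set.BijOn (gammaNK n k) (Set.Iio (2 ^ n)) {w : List (Fin 2) | w.length = n} ∧
    Set.BijOn (rhoNK n k) (Set.Iio (2 ^ n)) {w : List (Fin 2) | w.length = n} := by
  obtain ⟨c, rfl⟩ := hk
  have hq : (2 * c + 1) / 2 = c := by omega
  have h5 : (n + 1 - (2 * c + 1)) + 2 * c = n := by omega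
  constructor
  · have h := grSeq_bijOn (n + 1 - (2 * c + 1)) c true
    rw [h5] at h
    have hfun : gammaNK n (2 * c + 1) = grSeq (n + 1 - (2 * c + 1)) true c := by
      funext i
      show grSeq (n + 1 - (2 * c + 1)) true ((2 * c + 1) / 2) i = _
      rw [hq]
    rw [hfun]; exact h
  · have h := grSeq_bijOn (n + 1 - (2 * c + 1)) c false
    rw [h5] at h
    have hfun : rhoNK n (2 * c + 1) = grSeq (n + 1 - (2 * c + 1)) false c := by
      funext i
      show grSeq (n + 1 - (2 * c + 1)) false ((2 * c + 1) / 2) i = _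
      rw [hq]
    rw [hfun]; exact h
end

section
/- Let A = {0,1}, k = 2k'+1 odd, n ≥ k+1, n0 = n−k+1, and J = {n0, n0+2, …, n−2, n}. For every j ∈ J with j ≠ n0, the sequence of pairs ((Q^{[j]}_{[i]}, C^{[j]}_{[i]}))_{0 ≤ i ≤ 2^n−1} is 2^{j+1}-periodic. -/

lemma cplW_length (w : List (Fin 2)) : (cplW w).length = w.length := by simp [cplW]

lemma cplW_iter_length (r : ℕ) (w : List (Fin 2)) : (cplW^[r] w).length = w.length := by
  induction r generalizing w with
  | zero => rfl
  | succ r ih => rw [Function.iterate_succ_apply, ih, cplW_length]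

lemma grSeq_succ_drop (n0 t : ℕ) (b : Bool) (i m : ℕ) :
    (grSeq n0 b (t + 1) i).drop (2 + m) =
    (grSeq n0 (i / 2 ^ (n0 + 2 * t) % 2 == 0) t (i % 2 ^ (n0 + 2 * t))).drop m := by
  rw [show grSeq n0 b (t + 1) i =
      (cplW^[i % 2 ^ (n0 + 2 * t)]
        (if b then
          (if i / 2 ^ (n0 + 2 * t) = 0 then [0, 0]
           else if i / 2 ^ (n0 + 2 * t) = 1 then [0, 1]
           else if i / 2 ^ (n0 + 2 * t) = 2 then [1, 1] else [1, 0])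
         else
          (if i / 2 ^ (n0 + 2 * t) = 0 then [1, 0]
           else if i / 2 ^ (n0 + 2 * t) = 1 then [1, 1]
           else if i / 2 ^ (n0 + 2 * t) = 2 then [0, 1] else [0, 0])) ++
        grSeq n0 (i / 2 ^ (n0 + 2 * t) % 2 == 0) t (i % 2 ^ (n0 + 2 * t))) from rfl]
  rw [show 2 + m =
      (cplW^[i % 2 ^ (n0 + 2 * t)]
        (if b then
          (if i / 2 ^ (n0 + 2 * t) = 0 then ([0, 0] : List (Fin 2))
           else if i / 2 ^ (n0 + 2 * t) = 1 then [0, 1]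
           else if i / 2 ^ (n0 + 2 * t) = 2 then [1, 1] else [1, 0])
         else
          (if i / 2 ^ (n0 + 2 * t) = 0 then [1, 0]
           else if i / 2 ^ (n0 + 2 * t) = 1 then [1, 1]
           else if i / 2 ^ (n0 + 2 * t) = 2 then [0, 1] else [0, 0]))).length + m
      from by rw [cplW_iter_length]; split_ifs <;> rfl]
  exact List.drop_length_add_append m

lemma grSeq_periodic (n0 u : ℕ) :
    ∀ d (b b' : Bool) (i i' : ℕ), i % 2 ^ (n0 + 2 * u + 1) = i' % 2 ^ (n0 + 2 * u + 1) →
    ((grSeq n0 b (u + 1 + d) i).drop (2 * (d + 1))).take 2 =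
    ((grSeq n0 b' (u + 1 + d) i').drop (2 * (d + 1))).take 2 := by
  intro d
  induction d with
  | zero =>
    intro b b' i i' h
    have hmod : i % 2 ^ (n0 + 2 * u) = i' % 2 ^ (n0 + 2 * u) := by
      have hd : (2 : ℕ) ^ (n0 + 2 * u) ∣ 2 ^ (n0 + 2 * u + 1) :=
        pow_dvd_pow 2 (Nat.le_succ _)
      rw [← Nat.mod_mod_of_dvd i hd, ← Nat.mod_mod_of_dvd i' hd, h]
    have hbit : i / 2 ^ (n0 + 2 * u) % 2 = i' / 2 ^ (n0 + 2 * u) % 2 := by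
      have e1 : i % 2 ^ (n0 + 2 * u + 1) / 2 ^ (n0 + 2 * u) = i / 2 ^ (n0 + 2 * u) % 2 := by
        rw [pow_succ]; exact Nat.mod_mul_right_div_self i _ 2
      have e2 : i' % 2 ^ (n0 + 2 * u + 1) / 2 ^ (n0 + 2 * u) = i' / 2 ^ (n0 + 2 * u) % 2 := by
        rw [pow_succ]; exact Nat.mod_mul_right_div_self i' _ 2
      rw [← e1, ← e2, h]
    rw [show 2 * (0 + 1) = 2 + 0 from rfl, grSeq_succ_drop, grSeq_succ_drop, hmod, hbit]
  | succ d ih =>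
    intro b b' i i' h
    rw [show u + 1 + (d + 1) = (u + 1 + d) + 1 from rfl,
        show 2 * (d + 1 + 1) = 2 + 2 * (d + 1) by ring,
        grSeq_succ_drop, grSeq_succ_drop]
    apply ih
    have hdvd : (2 : ℕ) ^ (n0 + 2 * u + 1) ∣ 2 ^ (n0 + 2 * (u + 1 + d)) :=
      pow_dvd_pow 2 (by omega)
    rw [Nat.mod_mod_of_dvd i hdvd, Nat.mod_mod_of_dvd i' hdvd, h]

/-- Let `k` be odd, `n ≥ k + 1`, `n0 = n - k + 1`, and `J = {n0, n0+2, …, n-2, n}`.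
For `j ∈ J` with `j ≠ n0`, writing `μ(i,j) = i mod 2^{j+1}`,
`Q^{[j]}_{[i]} = ⌊μ(i,j)/2^{j-2}⌋` and `C^{[j]}_{[i]}` the two-letter factor of
`γ^{n,k}_{[i]}` in positions `j, j-1` from the right, the sequence of pairs
`((Q^{[j]}_{[i]}, C^{[j]}_{[i]}))_{0 ≤ i ≤ 2^n-1}` is `2^{j+1}`-periodic. -/
theorem statement10 (n k : ℕ) (hk1 : 1 ≤ k) (hk : Odd k) (hn : k + 1 ≤ n) :
    ∀ j, n - k + 1 < j → j ≤ n → (j - (n - k + 1)) % 2 = 0 →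
    ∀ i, i + 2 ^ (j + 1) ≤ 2 ^ n - 1 →
      ((i + 2 ^ (j + 1)) % 2 ^ (j + 1) / 2 ^ (j - 2),
        ((gammaNK n k (i + 2 ^ (j + 1))).drop (n - j)).take 2) =
      (i % 2 ^ (j + 1) / 2 ^ (j - 2),
        ((gammaNK n k i).drop (n - j)).take 2) := by
  intro j hj1 hj2 hj3 i hi
  have hk2 : k % 2 = 1 := Nat.odd_iff.mp hk
  have hjn : j + 1 < n := by
    have h1 : 2 ^ (j + 1) ≤ 2 ^ n - 1 := le_trans (Nat.le_add_left _ _) hi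
    have h2 : (0:ℕ) < 2 ^ n := Nat.pow_pos (by norm_num)
    have h3 : 2 ^ (j + 1) < 2 ^ n := by omega
    exact (Nat.pow_lt_pow_iff_right (by norm_num)).mp h3
  set u := (j - (n - k + 1)) / 2 with hu
  have hj : j = (n - k + 1) + 2 * u := by omega
  have hd : k / 2 = u + 1 + (k / 2 - u - 1) := by omega
  have hnj : n - j = 2 * ((k / 2 - u - 1) + 1) := by omega
  have hn0 : n + 1 - k = n - k + 1 := by omega
  simp only [Prod.mk.injEq]
  refine ⟨by rw [Nat.add_mod_right], ?_⟩
  unfold gammaNK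
  rw [hn0, hd, hnj]
  refine grSeq_periodic (n - k + 1) u _ true true _ i ?_
  have he : (n - k + 1) + 2 * u + 1 = j + 1 := by omega
  rw [he]
  exact Nat.add_mod_right i _
end

section
/- Let A = {0,1}, let n ≥ 1, and let k be a positive even integer. If a σ_k-Gray cycle exists over a set X ⊆ {0,1}^n, then |X| ≤ 2^{n−1}. -/
/-- `w` (restricted to indices `< N`, where `N = |X|`) is a `σ_k`-Gray cycle over the
finite set of words `X`: the terms lie in `X`, enumerate all of `X`, are pairwise
distinct, two consecutive terms have the same length and Hamming distance exactly `k`,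
and so do the first and the last term. -/
def IsSigmaGrayCycle {α : Type*} [DecidableEq α] (k N : ℕ) (w : ℕ → List α)
    (X : Finset (List α)) : Prop :=
  N = X.card ∧
  (∀ i, i < N → w i ∈ X) ∧
  (∀ x ∈ X, ∃ i, i < N ∧ w i = x) ∧
  (∀ i, i < N → ∀ j, j < N → w i = w j → i = j) ∧
  (∀ i, 1 ≤ i → i < N →
    (w (i - 1)).length = (w i).length ∧ hammingL (w (i - 1)) (w i) = k) ∧
  (0 < N → (w (N - 1)).length = (w 0).length ∧ hammingL (w (N - 1)) (w 0) = k)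

lemma hammingL_cons {α : Type*} [DecidableEq α] (a b : α) (t t' : List α) :
    hammingL (a::t) (b::t') = (if a = b then 0 else 1) + hammingL t t' := by
  by_cases hab : a = b <;> simp [hammingL, hab, Nat.add_comm]

lemma parity_aux : ∀ (w w' : List (Fin 2)), w.length = w'.length →
    (w.count 1 + w'.count 1 + hammingL w w') % 2 = 0 := by
  intro w
  induction w with
  | nil => intro w' h; cases w' <;> simp [hammingL] at h ⊢
  | cons a t ih =>
    intro w' h
    cases w' with
    | nil => simp at h
    | cons b t' =>
      simp only [List.length_cons, Nat.add_right_cancel_iff] at h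
      have := ih t' h
      rw [hammingL_cons]
      simp only [List.count_cons]
      fin_cases a <;> fin_cases b <;> simp <;> omega

lemma parity_eq (w w' : List (Fin 2)) (hl : w.length = w'.length)
    (he : Even (hammingL w w')) : w.count 1 % 2 = w'.count 1 % 2 := by
  have := parity_aux w w' hl
  obtain ⟨m, hm⟩ := he
  omega

/-- For `k` even and positive, if a `σ_k`-Gray cycle exists over a set
`X ⊆ {0,1}^n`, then `|X| ≤ 2^{n-1}`. -/
theorem statement15 (n k N : ℕ) (hn : 1 ≤ n) (hk : 0 < k) (hke : Even k)
    (X : Finset (List (Fin 2))) (hX : ∀ w ∈ X, w.length = n)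
    (α : ℕ → List (Fin 2)) (h : IsSigmaGrayCycle k N α X) :
    X.card ≤ 2 ^ (n - 1) := by
  obtain ⟨hN, hmem, hsurj, hinjd, hstep, hcyc⟩ := h
  rcases Nat.eq_zero_or_pos N with h0 | h0
  · rw [← hN, h0]; exact Nat.zero_le _
  set p := (α 0).count 1 % 2 with hp
  have key : ∀ i, i < N → (α i).count 1 % 2 = p := by
    intro i
    induction i with
    | zero => intro _; rfl
    | succ i ih =>
      intro hi
      have hs := hstep (i+1) (by omega) hi
      simp only [Nat.add_sub_cancel] at hs
      have hpe := parity_eq _ _ hs.1 (hs.2 ▸ hke)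
      rw [← hpe]; exact ih (by omega)
  have hpar : ∀ x ∈ X, x.count 1 % 2 = p := by
    intro x hx; obtain ⟨i, hi, hix⟩ := hsurj x hx; rw [← hix]; exact key i hi
  have hcard : X.card ≤ (Finset.univ : Finset (Fin (n-1) → Fin 2)).card := by
    apply Finset.card_le_card_of_injOn (fun w (i : Fin (n-1)) => w.getD i 0) (fun _ _ => Finset.mem_univ _)
    intro x hx y hy hfxy
    have hlx := hX x hx; have hly := hX y hy
    have htake : x.take (n-1) = y.take (n-1) := by
      apply List.ext_getElem
      · simp [hlx, hly]
      · intro i h1 h2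
        have hi : i < n - 1 := by
          have : (x.take (n-1)).length = n - 1 := by simp [hlx]
          omega
        have hcf := congrFun hfxy ⟨i, hi⟩
        simp only at hcf
        rw [List.getD_eq_getElem x 0 (by omega), List.getD_eq_getElem y 0 (by omega)] at hcf
        simpa [List.getElem_take] using hcf
    obtain ⟨a, ha⟩ := List.length_eq_one_iff.mp
      (show (x.drop (n-1)).length = 1 by simp [hlx]; omega)
    obtain ⟨b, hb⟩ := List.length_eq_one_iff.mp
      (show (y.drop (n-1)).length = 1 by simp [hly]; omega)
    have hxd := (List.take_append_drop (n-1) x).symm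
    have hyd := (List.take_append_drop (n-1) y).symm
    rw [ha] at hxd; rw [hb] at hyd
    have hab : a = b := by
      have h1 := hpar x hx; have h2 := hpar y hy
      rw [hxd, List.count_append] at h1
      rw [hyd, List.count_append, ← htake] at h2
      fin_cases a <;> fin_cases b <;>
        first
          | rfl
          | (exfalso; simp [List.count_cons] at h1 h2; omega)
    rw [hxd, hyd, htake, hab]
  simpa using hcard
end
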